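/- Let n ≥ 1 and let a : Fin n → ℚ. The circulant matrix C(a_0,…,a_{n−1}) is singular (has determinant zero) if and only if there exists a divisor d of n such that the d-th cyclotomic polynomial Φ_d(x) divides the associated polynomial f(x) in ℚ[x]. -/

import Mathlib

open Polynomial

/-- The circulant matrix whose `(i,j)` entry is `a (j - i)` (indices mod `n`). -/
def circulantMat {n : ℕ} (a : Fin n → ℚ) : Matrix (Fin n) (Fin n) ℚ :=
  Matrix.of fun i j => a (j - i)

/-- The associated polynomial `f(x) = a₀ + a₁ x + ⋯ + a_{n-1} x^{n-1}`. -/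
noncomputable def assocPoly {n : ℕ} (a : Fin n → ℚ) : Polynomial ℚ :=
  ∑ j : Fin n, C (a j) * X ^ (j : ℕ)

open Fin.CommRing

/-- the shift matrix -/
def shiftP (n : ℕ) [NeZero n] : Matrix (Fin n) (Fin n) ℚ :=
  circulantMat (fun k => if k = 1 then 1 else 0)

lemma shiftP_pow (n : ℕ) [NeZero n] (m : ℕ) :
    (shiftP n) ^ m = circulantMat (fun k => if k = (m : Fin n) then 1 else 0) := by
  induction m with
  | zero =>
    ext i j
    simp only [pow_zero, circulantMat, Matrix.of_apply, Nat.cast_zero, Matrix.one_apply,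
      sub_eq_zero]
    exact if_congr eq_comm rfl rfl
  | succ m ih =>
    rw [pow_succ, ih]
    ext i j
    simp only [Matrix.mul_apply, circulantMat, Matrix.of_apply, shiftP]
    rw [Finset.sum_congr rfl (fun k _ => ?_), Finset.sum_ite_eq' Finset.univ (i + (m : Fin n))
      (fun k => if j - k = 1 then (1 : ℚ) else 0)]
    · simp only [Finset.mem_univ, if_true]
      have h1 : (j - (i + (m : Fin n)) = 1) ↔ (j - i = (((m : ℕ) + 1 : ℕ) : Fin n)) := by
        push_cast
        constructor <;> intro h <;> linear_combination h
      rw [if_congr h1 rfl rfl]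
    · have h2 : (k - i = (m : Fin n)) ↔ (k = i + (m : Fin n)) := sub_eq_iff_eq_add'
      rw [if_congr h2 rfl rfl, ite_mul, zero_mul, one_mul]

lemma aeval_shiftP {n : ℕ} [NeZero n] (a : Fin n → ℚ) :
    aeval (shiftP n) (assocPoly a) = circulantMat a := by
  rw [assocPoly, map_sum]
  ext i j
  simp only [map_mul, aeval_C, map_pow, aeval_X, shiftP_pow, Fin.cast_val_eq_self,
    Matrix.sum_apply, circulantMat, Matrix.of_apply, Algebra.algebraMap_eq_smul_one,
    Matrix.smul_mul, Matrix.smul_apply, Matrix.one_mul, smul_eq_mul, mul_ite, mul_one, mul_zero]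
  rw [Finset.sum_ite_eq Finset.univ (j - i) a]
  simp

lemma poly_eq_assocPoly {n : ℕ} (g : ℚ[X]) (hg : g.natDegree < n) :
    g = assocPoly (fun k : Fin n => g.coeff k) := by
  conv_lhs => rw [g.as_sum_range' n hg]
  rw [assocPoly, Fin.sum_univ_eq_sum_range (fun i => C (g.coeff i) * X ^ i)]
  exact Finset.sum_congr rfl fun i _ => C_mul_X_pow_eq_monomial.symm

theorem stmt_1 (n : ℕ) (hn : 1 ≤ n) (a : Fin n → ℚ) :
    (circulantMat a).det = 0 ↔
      ∃ d : ℕ, d ∣ n ∧ cyclotomic d ℚ ∣ assocPoly a := by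
  haveI : NeZero n := ⟨by omega⟩
  set P := shiftP n with hP
  have hPn : P ^ n = 1 := by
    rw [shiftP_pow, show ((n : Fin n)) = (((0 : ℕ) : Fin n)) by simp, ← shiftP_pow, pow_zero]
  have hXn : (aeval P) ((X : ℚ[X]) ^ n - 1) = 0 := by
    rw [map_sub, map_pow, aeval_X, map_one, hPn, sub_self]
  constructor
  · intro hdet
    by_contra hcon
    push_neg at hcon
    have hcop : IsCoprime ((X : ℚ[X]) ^ n - 1) (assocPoly a) := by
      rw [← prod_cyclotomic_eq_X_pow_sub_one (by omega) ℚ]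
      apply IsCoprime.prod_left
      intro d hd
      have hdpos : 0 < d := Nat.pos_of_mem_divisors hd
      exact (cyclotomic.irreducible_rat hdpos).coprime_iff_not_dvd.mpr
        (hcon d (Nat.dvd_of_mem_divisors hd))
    obtain ⟨u, v, huv⟩ := hcop
    have h2 := congrArg (aeval P) huv
    rw [map_add, map_mul, map_mul, hXn, mul_zero, zero_add, aeval_shiftP, map_one] at h2
    have h3 := congrArg Matrix.det h2
    rw [Matrix.det_mul, hdet, mul_zero, Matrix.det_one] at h3
    exact zero_ne_one h3
  · rintro ⟨d, hdn, g, hg⟩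
    by_contra hdet
    have hdpos : 0 < d := Nat.pos_of_dvd_of_pos hdn (by omega)
    obtain ⟨h, hh⟩ : cyclotomic d ℚ ∣ (X : ℚ[X]) ^ n - 1 := by
      rw [← prod_cyclotomic_eq_X_pow_sub_one (by omega) ℚ]
      exact Finset.dvd_prod_of_mem _ (Nat.mem_divisors.mpr ⟨hdn, by omega⟩)
    -- cyclotomic d ℚ (P) is invertible
    have hC : circulantMat a = aeval P (cyclotomic d ℚ) * aeval P g := by
      rw [← map_mul, ← hg, aeval_shiftP]
    have hdet2 : (aeval P (cyclotomic d ℚ)).det ≠ 0 := by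
      intro h0
      apply hdet
      rw [hC, Matrix.det_mul, h0, zero_mul]
    have hunit : IsUnit (aeval P (cyclotomic d ℚ)) := by
      rw [Matrix.isUnit_iff_isUnit_det, isUnit_iff_ne_zero]
      exact hdet2
    have hhP : aeval P h = 0 := by
      obtain ⟨U, hU⟩ := hunit
      have : (aeval P (cyclotomic d ℚ)) * aeval P h = 0 := by
        rw [← map_mul, ← hh, hXn]
      calc aeval P h = (↑U⁻¹ * U : Matrix (Fin n) (Fin n) ℚ) * aeval P h := by
            rw [Units.inv_mul, one_mul]
        _ = ↑U⁻¹ * ((aeval P (cyclotomic d ℚ)) * aeval P h) := by rw [hU, mul_assoc]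
        _ = 0 := by rw [this, mul_zero]
    -- h is nonzero with degree < n
    have hXne : ((X : ℚ[X]) ^ n - 1) ≠ 0 := by
      have := X_pow_sub_C_ne_zero (R := ℚ) (by omega : 0 < n) 1
      rwa [map_one] at this
    have hhne : h ≠ 0 := by
      intro h0
      rw [h0, mul_zero] at hh
      exact hXne hh
    have hcycne : cyclotomic d ℚ ≠ 0 := cyclotomic_ne_zero d ℚ
    have hdegh : h.natDegree < n := by
      have h1 : ((X : ℚ[X]) ^ n - 1).natDegree = n := by
        have := natDegree_X_pow_sub_C (n := n) (r := (1 : ℚ))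
        rwa [map_one] at this
      have h2 : (cyclotomic d ℚ).natDegree = Nat.totient d := natDegree_cyclotomic d ℚ
      have h3 := natDegree_mul hcycne hhne
      rw [← hh, h1, h2] at h3
      have := Nat.totient_pos.mpr hdpos
      omega
    have hb : h = assocPoly (fun k : Fin n => h.coeff k) := poly_eq_assocPoly h hdegh
    rw [hb, aeval_shiftP] at hhP
    apply hhne
    rw [hb]
    have hball : ∀ k : Fin n, h.coeff k = 0 := by
      intro k
      have := congrFun (congrFun hhP 0) k
      simpa [circulantMat] using this
    rw [show (fun k : Fin n => h.coeff k) = fun _ => (0:ℚ) from funext hball]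
    simp [assocPoly]
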